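/- arXiv:1609.05988 — 2 statements merged into one kernel-verified Lean document; each statement's English description precedes it below -/
import Mathlib

section
/- (Lacasse's identity.) Let U(x) = Σ_{n≥0} n^n x^n/n! as a formal power series over ℚ, with the convention 0^0 = 1. Then U(x)^3 − U(x)^2 = Σ_{n≥0} n^{n+1} x^n/n!. Moreover, both sides equal T(x)/(1−T(x))^3, where T(x) is the tree function, the unique formal power series over ℚ with zero constant term satisfying T = x·exp(T). -/
open PowerSeries

/-- Composition `φ(f)` of formal power series, which is the correct notion of
substitution of `f` into `φ` whenever `f` has zero constant term. -/
noncomputable def psComp {A : Type*} [CommRing A] (φ f : PowerSeries A) : PowerSeries A :=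
  PowerSeries.mk fun m => ∑ n ∈ Finset.range (m + 1), coeff n φ * coeff m (f ^ n)

open Finset

lemma shift_natDegree_lt (p : Polynomial ℚ) (hp : p.natDegree ≠ 0) :
    (p.comp (Polynomial.X + Polynomial.C 1) - p).natDegree < p.natDegree := by
  have hp0 : p ≠ 0 := fun h => hp (by simp [h])
  have hdc : (p.comp (Polynomial.X + Polynomial.C 1)).natDegree = p.natDegree := by
    rw [Polynomial.natDegree_comp]
    simp [show (Polynomial.X + 1 : Polynomial ℚ).natDegree = 1 by simpa using Polynomial.natDegree_X_add_C (1:ℚ)]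
  have hlc : (p.comp (Polynomial.X + Polynomial.C 1)).leadingCoeff = p.leadingCoeff := by
    rw [Polynomial.leadingCoeff_comp (by simp [show (Polynomial.X + 1 : Polynomial ℚ).natDegree = 1 by simpa using Polynomial.natDegree_X_add_C (1:ℚ)])]
    simp [show (Polynomial.X + 1 : Polynomial ℚ).leadingCoeff = 1 by simpa using (Polynomial.monic_X_add_C (1:ℚ)).leadingCoeff]
  have hc0 : p.comp (Polynomial.X + Polynomial.C 1) ≠ 0 := by
    intro h
    apply hp0
    rw [← Polynomial.leadingCoeff_eq_zero, ← hlc, h, Polynomial.leadingCoeff_zero]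
  have hdeg : (p.comp (Polynomial.X + Polynomial.C 1)).degree = p.degree := by
    rw [Polynomial.degree_eq_natDegree hc0, Polynomial.degree_eq_natDegree hp0, hdc]
  have := Polynomial.degree_sub_lt hdeg hc0 hlc
  rw [hdeg, Polynomial.degree_eq_natDegree hp0] at this
  rcases eq_or_ne (p.comp (Polynomial.X + Polynomial.C 1) - p) 0 with h | h
  · rw [h]; simpa [Polynomial.natDegree_pos_iff_degree_pos] using Nat.pos_of_ne_zero hp
  · exact Polynomial.natDegree_lt_natDegree h (by rwa [Polynomial.degree_eq_natDegree hp0])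

lemma fd (n : ℕ) (p : Polynomial ℚ) (hp : p.natDegree < n) :
    ∑ k ∈ range (n + 1), (-1 : ℚ) ^ k * (n.choose k : ℚ) * p.eval (k : ℚ) = 0 := by
  induction n generalizing p with
  | zero => omega
  | succ n ih =>
    set q : Polynomial ℚ := p.comp (Polynomial.X + Polynomial.C 1) - p with hq
    have hqe : ∀ j : ℕ, q.eval (j : ℚ) = p.eval ((j : ℚ) + 1) - p.eval (j : ℚ) := by
      intro j; simp [hq, Polynomial.eval_comp]
    set S1 := ∑ i ∈ range (n+1), (-1:ℚ)^i * (n.choose i : ℚ) * p.eval ((i:ℚ)+1) with hS1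
    set S2 := ∑ i ∈ range (n+1), (-1:ℚ)^i * (n.choose (i+1) : ℚ) * p.eval ((i:ℚ)+1) with hS2
    set S0 := ∑ i ∈ range (n+1), (-1:ℚ)^i * (n.choose i : ℚ) * p.eval (i:ℚ) with hS0
    have e1 : ∑ k ∈ range (n + 2), (-1 : ℚ) ^ k * ((n+1).choose k : ℚ) * p.eval (k : ℚ)
        = -S1 - S2 + p.eval 0 := by
      rw [Finset.sum_range_succ' (fun k => (-1 : ℚ) ^ k * ((n+1).choose k : ℚ) * p.eval (k : ℚ)) (n+1)]
      have hterm : ∀ i ∈ range (n+1), (-1:ℚ)^(i+1) * ((n+1).choose (i+1) : ℚ) * p.eval ((i+1:ℕ):ℚ)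
          = -((-1:ℚ)^i * (n.choose i : ℚ) * p.eval ((i:ℚ)+1))
            + -((-1:ℚ)^i * (n.choose (i+1) : ℚ) * p.eval ((i:ℚ)+1)) := by
        intro i _
        rw [Nat.choose_succ_succ]
        push_cast
        ring
      rw [Finset.sum_congr rfl hterm, Finset.sum_add_distrib, Finset.sum_neg_distrib,
        Finset.sum_neg_distrib, ← hS1, ← hS2]
      simp
      ring
    have e2 : S0 = -S2 + p.eval 0 := by
      have hS : ∑ k ∈ range (n + 2), (-1 : ℚ) ^ k * (n.choose k : ℚ) * p.eval (k : ℚ) = S0 := by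
        rw [Finset.sum_range_succ, Nat.choose_succ_self, hS0]; simp
      rw [← hS, Finset.sum_range_succ' (fun k => (-1 : ℚ) ^ k * (n.choose k : ℚ) * p.eval (k : ℚ)) (n+1)]
      have hterm : ∀ i ∈ range (n+1), (-1:ℚ)^(i+1) * (n.choose (i+1) : ℚ) * p.eval ((i+1:ℕ):ℚ)
          = -((-1:ℚ)^i * (n.choose (i+1) : ℚ) * p.eval ((i:ℚ)+1)) := by
        intro i _; push_cast; ring
      rw [Finset.sum_congr rfl hterm, Finset.sum_neg_distrib, ← hS2]
      simp
    have e3 : ∑ j ∈ range (n + 1), (-1 : ℚ) ^ j * (n.choose j : ℚ) * q.eval (j : ℚ) = S1 - S0 := by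
      rw [hS1, hS0, ← Finset.sum_sub_distrib]
      refine Finset.sum_congr rfl fun j _ => ?_
      rw [hqe]
      ring
    have key : ∑ k ∈ range (n + 2), (-1 : ℚ) ^ k * ((n+1).choose k : ℚ) * p.eval (k : ℚ)
        = - ∑ j ∈ range (n + 1), (-1 : ℚ) ^ j * (n.choose j : ℚ) * q.eval (j : ℚ) := by
      rw [e1, e3, e2]; ring
    rw [key]
    rcases eq_or_ne q 0 with h0 | h0
    · simp [h0]
    · rw [ih q ?_, neg_zero]
      have hpd : p.natDegree ≠ 0 := by
        intro hd
        apply h0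
        rw [hq, Polynomial.eq_C_of_natDegree_eq_zero hd]; simp
      have h2 := shift_natDegree_lt p hpd
      rw [← hq] at h2
      omega

lemma choose_aux (n k : ℕ) (hk : k ≤ n) :
    (n + 1).choose k * (n + 1 - k) = (n + 1) * n.choose k := by
  have h1 := Nat.add_one_mul_choose_eq n (n - k)
  rw [Nat.choose_symm hk] at h1
  have e1 : n - k + 1 = n + 1 - k := by omega
  rw [e1] at h1
  have e2 : (n + 1).choose (n + 1 - k) = (n + 1).choose k := by
    rw [Nat.choose_symm (by omega)]
  rw [e2] at h1
  simpa using h1.symm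

lemma negpow (a b : ℕ) (h : b ≤ a) : (-1:ℚ)^(a-b) = (-1)^a * (-1)^b := by
  have h1 : (-1:ℚ)^(a-b) * (-1)^b = (-1)^a := by rw [← pow_add]; congr 1; omega
  have h2 : (-1:ℚ)^b * (-1)^b = 1 := by rw [← pow_add, ← two_mul, pow_mul]; norm_num
  calc (-1:ℚ)^(a-b) = (-1)^(a-b) * ((-1)^b * (-1)^b) := by rw [h2, mul_one]
    _ = (-1)^a * (-1)^b := by rw [← mul_assoc, h1]

lemma abel (n : ℕ) (hn : 1 ≤ n) (y : ℚ) :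
    ∑ j ∈ range n, (n.choose (j+1) : ℚ) * ((j+1 : ℕ) : ℚ) ^ j * (y + ((n-1-j : ℕ) : ℚ)) ^ (n-1-j)
      = n * (y + n) ^ (n - 1) := by
  induction n, hn using Nat.le_induction generalizing y with
  | base => simp
  | succ n hn ih =>
    set P : Polynomial ℚ :=
      (∑ j ∈ range (n+1), Polynomial.C (((n+1).choose (j+1) : ℚ) * ((j+1 : ℕ) : ℚ) ^ j)
          * (Polynomial.X + Polynomial.C (((n-j : ℕ)) : ℚ)) ^ (n-j))
        - Polynomial.C ((n+1 : ℕ) : ℚ) * (Polynomial.X + Polynomial.C ((n+1 : ℕ) : ℚ)) ^ n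
      with hP
    have evalP : ∀ z : ℚ, P.eval z
        = (∑ j ∈ range (n+1), ((n+1).choose (j+1) : ℚ) * ((j+1 : ℕ) : ℚ) ^ j
            * (z + ((n-j : ℕ) : ℚ)) ^ (n-j)) - ((n+1:ℕ) : ℚ) * (z + ((n+1:ℕ) : ℚ)) ^ n := by
      intro z
      simp [hP, Polynomial.eval_finset_sum]
    have hderiv : Polynomial.derivative P = 0 := by
      apply Polynomial.funext
      intro z
      rw [Polynomial.eval_zero, hP]
      rw [Polynomial.derivative_sub, Polynomial.derivative_sum]
      have hterm : ∀ j ∈ range (n+1),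
          Polynomial.derivative (Polynomial.C (((n+1).choose (j+1) : ℚ) * ((j+1 : ℕ) : ℚ) ^ j)
            * (Polynomial.X + Polynomial.C (((n-j : ℕ)) : ℚ)) ^ (n-j))
          = Polynomial.C (((n+1).choose (j+1) : ℚ) * ((j+1 : ℕ) : ℚ) ^ j * ((n-j : ℕ) : ℚ))
            * (Polynomial.X + Polynomial.C (((n-j : ℕ)) : ℚ)) ^ (n-j-1) := by
        intro j _
        rw [Polynomial.derivative_C_mul, Polynomial.derivative_X_add_C_pow, ← mul_assoc,
          ← Polynomial.C_mul]
      rw [Finset.sum_congr rfl hterm]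
      rw [Polynomial.derivative_C_mul, Polynomial.derivative_X_add_C_pow]
      simp only [Polynomial.eval_sub, Polynomial.eval_finset_sum, Polynomial.eval_mul,
        Polynomial.eval_pow, Polynomial.eval_add, Polynomial.eval_C, Polynomial.eval_X]
      have hIH := ih (z + 1)
      have hsum : ∑ j ∈ range (n+1), ((n+1).choose (j+1) : ℚ) * ((j+1 : ℕ) : ℚ) ^ j * ((n-j : ℕ) : ℚ)
            * (z + ((n-j : ℕ) : ℚ)) ^ (n-j-1)
          = ((n+1:ℕ) : ℚ) * ∑ j ∈ range n, (n.choose (j+1) : ℚ) * ((j+1 : ℕ) : ℚ) ^ j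
            * ((z+1) + ((n-1-j : ℕ) : ℚ)) ^ (n-1-j) := by
        rw [Finset.sum_range_succ, Finset.mul_sum]
        have hzero : ((n+1).choose (n+1) : ℚ) * ((n+1 : ℕ) : ℚ) ^ n * ((n-n : ℕ) : ℚ)
            * (z + ((n-n : ℕ) : ℚ)) ^ (n-n-1) = 0 := by
          simp
        rw [hzero, add_zero]
        refine Finset.sum_congr rfl fun j hj => ?_
        have hjn : j < n := Finset.mem_range.mp hj
        have hc : ((n+1).choose (j+1) : ℚ) * ((n-j : ℕ) : ℚ)
            = ((n+1:ℕ) : ℚ) * (n.choose (j+1) : ℚ) := by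
          have := choose_aux n (j+1) (by omega)
          rw [show n + 1 - (j+1) = n - j by omega] at this
          exact_mod_cast this
        have he : n - j - 1 = n - 1 - j := by omega
        have hx : (z + ((n-j : ℕ) : ℚ)) = (z + 1) + ((n-1-j : ℕ) : ℚ) := by
          rw [show (n - j : ℕ) = (n - 1 - j) + 1 by omega]
          push_cast
          ring
        rw [he, hx]
        calc ((n+1).choose (j+1) : ℚ) * ((j+1 : ℕ) : ℚ) ^ j * ((n-j : ℕ) : ℚ)
              * ((z+1) + ((n-1-j : ℕ) : ℚ)) ^ (n-1-j)
            = (((n+1).choose (j+1) : ℚ) * ((n-j : ℕ) : ℚ)) * (((j+1 : ℕ) : ℚ) ^ j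
              * ((z+1) + ((n-1-j : ℕ) : ℚ)) ^ (n-1-j)) := by ring
          _ = _ := by rw [hc]; ring
      rw [hsum, hIH]
      have hcast : (z + 1) + (n : ℚ) = z + ((n+1:ℕ) : ℚ) := by push_cast; ring
      rw [hcast]
      push_cast
      ring
    have hPC : P = Polynomial.C (P.coeff 0) := Polynomial.eq_C_of_derivative_eq_zero hderiv
    have hy0 : P.eval (-(((n+1):ℕ) : ℚ)) = 0 := by
      rw [evalP]
      have hterm : ∀ j ∈ range (n+1),
          ((n+1).choose (j+1) : ℚ) * ((j+1 : ℕ) : ℚ) ^ j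
            * ((-(((n+1):ℕ) : ℚ)) + ((n-j : ℕ) : ℚ)) ^ (n-j)
          = (-1:ℚ)^(n+1) * ((-1:ℚ)^(j+1) * ((n+1).choose (j+1) : ℚ) * (((j+1:ℕ)) : ℚ) ^ n) := by
        intro j hj
        have hjn : j < n + 1 := Finset.mem_range.mp hj
        have hx : (-(((n+1):ℕ) : ℚ)) + ((n-j : ℕ) : ℚ) = -(((j+1 : ℕ)) : ℚ) := by
          have : ((n - j : ℕ) : ℚ) = (n : ℚ) - (j : ℚ) := by
            rw [Nat.cast_sub (by omega)]
          rw [this]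
          push_cast
          ring
        rw [hx, neg_pow]
        rw [negpow n j (by omega)]
        have hpow : ((j+1 : ℕ) : ℚ) ^ j * ((j+1 : ℕ) : ℚ) ^ (n-j) = ((j+1 : ℕ) : ℚ) ^ n := by
          rw [← pow_add]
          congr 1
          omega
        calc ((n+1).choose (j+1) : ℚ) * ((j+1 : ℕ) : ℚ) ^ j
              * ((-1:ℚ)^n * (-1:ℚ)^j * ((j+1 : ℕ) : ℚ) ^ (n-j))
            = ((-1:ℚ)^n * (-1:ℚ)^j) * ((n+1).choose (j+1) : ℚ)
              * (((j+1 : ℕ) : ℚ) ^ j * ((j+1 : ℕ) : ℚ) ^ (n-j)) := by ring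
          _ = _ := by rw [hpow]; ring
      rw [Finset.sum_congr rfl hterm, ← Finset.mul_sum]
      have hfd := fd (n+1) (Polynomial.X ^ n) (by simp)
      rw [Finset.sum_range_succ'
        (fun k => (-1 : ℚ) ^ k * ((n+1).choose k : ℚ) * Polynomial.eval (k : ℚ) (Polynomial.X ^ n)) (n+1)] at hfd
      simp only [Polynomial.eval_pow, Polynomial.eval_X] at hfd
      have h0n : ((0:ℕ) : ℚ) ^ n = 0 := by
        simp [zero_pow (by omega : n ≠ 0)]
      rw [h0n] at hfd
      simp only [mul_zero, add_zero] at hfd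
      have : ∑ j ∈ range (n+1), (-1:ℚ)^(j+1) * ((n+1).choose (j+1) : ℚ) * (((j+1:ℕ)) : ℚ) ^ n = 0 := by
        exact hfd
      rw [this, mul_zero]
      have : (-(((n+1):ℕ) : ℚ)) + ((n+1:ℕ) : ℚ) = 0 := by ring
      rw [this, zero_pow (by omega : n ≠ 0), mul_zero, sub_zero]
    have hP0 : P = 0 := by
      rw [hPC] at hy0 ⊢
      rw [Polynomial.eval_C] at hy0
      rw [hy0, Polynomial.C_0]
    have := evalP y
    rw [hP0, Polynomial.eval_zero] at this
    have hmain : ∑ j ∈ range (n+1), ((n+1).choose (j+1) : ℚ) * ((j+1 : ℕ) : ℚ) ^ j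
        * (y + ((n-j : ℕ) : ℚ)) ^ (n-j) = ((n+1:ℕ) : ℚ) * (y + ((n+1:ℕ) : ℚ)) ^ n := by
      linarith [this]
    have hre : ∀ j ∈ range (n+1), ((n+1).choose (j+1) : ℚ) * ((j+1 : ℕ) : ℚ) ^ j
        * (y + (((n+1)-1-j : ℕ) : ℚ)) ^ ((n+1)-1-j)
        = ((n+1).choose (j+1) : ℚ) * ((j+1 : ℕ) : ℚ) ^ j * (y + ((n-j : ℕ) : ℚ)) ^ (n-j) := by
      intro j _
      rw [show (n+1)-1-j = n - j by omega]
    rw [Finset.sum_congr rfl hre, hmain]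
    push_cast
    ring

lemma H0 (n : ℕ) (hn : 1 ≤ n) :
    ∑ j ∈ range n, (n.choose (j+1) : ℚ) * ((j+1 : ℕ) : ℚ) ^ j * (((n-1-j : ℕ)) : ℚ) ^ (n-1-j)
      = (n : ℚ) ^ n := by
  have h := abel n hn 0
  simp only [zero_add] at h
  rw [h, ← pow_succ']
  congr 1
  omega

lemma H0' (n : ℕ) (hn : 1 ≤ n) :
    ∑ k ∈ range n, (n.choose k : ℚ) * ((k : ℕ) : ℚ) ^ k * (((n-k : ℕ)) : ℚ) ^ (n-k-1)
      = (n : ℚ) ^ n := by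
  rw [← H0 n hn]
  rw [← Finset.sum_range_reflect
    (fun j => (n.choose (j+1) : ℚ) * ((j+1 : ℕ) : ℚ) ^ j * (((n-1-j : ℕ)) : ℚ) ^ (n-1-j)) n]
  refine Finset.sum_congr rfl fun k hk => ?_
  have hkn : k < n := Finset.mem_range.mp hk
  have e1 : n - 1 - k + 1 = n - k := by omega
  have e2 : n - 1 - (n - 1 - k) = k := by omega
  rw [e1, e2]
  rw [show n.choose (n-k) = n.choose k from Nat.choose_symm (by omega)]
  rw [show n - k - 1 = n - 1 - k by omega]
  ring

lemma cayley_sum (n : ℕ) (hn : 2 ≤ n) :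
    ∑ j ∈ range (n-1), (n.choose (j+1) : ℚ) * ((j+1 : ℕ) : ℚ) ^ j * (((n-1-j : ℕ)) : ℚ) ^ (n-1-j)
      = (n : ℚ) ^ n - (n : ℚ) ^ (n-1) := by
  have h := H0 n (by omega)
  rw [show n = (n-1)+1 by omega] at h
  rw [Finset.sum_range_succ] at h
  rw [show (n-1)+1 = n by omega] at h
  have hlast : (n.choose n : ℚ) * ((n : ℕ) : ℚ) ^ (n-1)
      * (((n-1-(n-1) : ℕ)) : ℚ) ^ (n-1-(n-1)) = (n : ℚ) ^ (n-1) := by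
    rw [Nat.sub_self, Nat.choose_self]
    push_cast
    simp
  rw [hlast] at h
  linarith

lemma coeff_psComp_exp (T : PowerSeries ℚ) (m : ℕ) :
    coeff m (psComp (PowerSeries.exp ℚ) T)
      = ∑ n ∈ range (m+1), ((n.factorial : ℚ))⁻¹ * coeff m (T ^ n) := by
  simp [psComp, PowerSeries.coeff_exp, one_div]

lemma coeff_pow_eq_zero {T : PowerSeries ℚ} (hT0 : constantCoeff T = 0)
    {m n : ℕ} (h : m < n) : coeff m (T ^ n) = 0 := by
  have hd : (X : PowerSeries ℚ) ^ n ∣ T ^ n :=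
    pow_dvd_pow_of_dvd (PowerSeries.X_dvd_iff.mpr hT0) n
  exact PowerSeries.X_pow_dvd_iff.mp hd m h

lemma coeffE {T : PowerSeries ℚ} (hT0 : constantCoeff T = 0) (m M : ℕ) (h : m ≤ M) :
    coeff m (psComp (PowerSeries.exp ℚ) T)
      = coeff m (∑ n ∈ range (M+1), PowerSeries.C ((n.factorial : ℚ)⁻¹) * T ^ n) := by
  rw [coeff_psComp_exp, map_sum]
  have hterm : ∀ n ∈ range (M+1),
      coeff m (PowerSeries.C ((n.factorial : ℚ)⁻¹) * T ^ n)
        = (n.factorial : ℚ)⁻¹ * coeff m (T ^ n) := fun n _ => by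
    rw [PowerSeries.coeff_C_mul]
  rw [Finset.sum_congr rfl hterm]
  apply Finset.sum_subset (Finset.range_subset_range.mpr (by omega))
  intro n _ hn
  simp only [Finset.mem_range, not_lt] at hn
  rw [coeff_pow_eq_zero hT0 (by omega), mul_zero]

lemma derivE {T : PowerSeries ℚ} (hT0 : constantCoeff T = 0) :
    d⁄dX ℚ (psComp (PowerSeries.exp ℚ) T) = d⁄dX ℚ T * psComp (PowerSeries.exp ℚ) T := by
  ext m
  have hD : d⁄dX ℚ (∑ n ∈ range (m+2), PowerSeries.C ((n.factorial : ℚ)⁻¹) * T ^ n)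
      = d⁄dX ℚ T * (∑ n ∈ range (m+1), PowerSeries.C ((n.factorial : ℚ)⁻¹) * T ^ n) := by
    rw [map_sum]
    have hterm : ∀ n ∈ range (m+2),
        d⁄dX ℚ (PowerSeries.C ((n.factorial : ℚ)⁻¹) * T ^ n)
          = PowerSeries.C ((n.factorial : ℚ)⁻¹ * n) * (T ^ (n-1) * d⁄dX ℚ T) := by
      intro n _
      rw [Derivation.leibniz, Derivation.leibniz_pow, PowerSeries.derivative_C, smul_zero,
        add_zero]
      simp only [smul_eq_mul, nsmul_eq_mul]
      rw [map_mul, map_natCast PowerSeries.C n]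
      ring
    rw [Finset.sum_congr rfl hterm]
    rw [Finset.sum_range_succ'
      (fun n => PowerSeries.C ((n.factorial : ℚ)⁻¹ * n) * (T ^ (n-1) * d⁄dX ℚ T)) (m+1)]
    have h0 : PowerSeries.C (((0:ℕ).factorial : ℚ)⁻¹ * (0:ℕ))
        * (T ^ (0-1) * d⁄dX ℚ T) = 0 := by
      simp
    rw [h0, add_zero, Finset.mul_sum]
    refine Finset.sum_congr rfl fun k _ => ?_
    have hfact : ((k+1).factorial : ℚ)⁻¹ * ((k+1 : ℕ) : ℚ) = (k.factorial : ℚ)⁻¹ := by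
      rw [Nat.factorial_succ]
      push_cast
      rw [mul_inv]
      have hk : (k.factorial : ℚ) ≠ 0 := Nat.cast_ne_zero.mpr k.factorial_ne_zero
      field_simp
    rw [show k + 1 - 1 = k from rfl]
    rw [hfact]
    ring
  have lhs1 : coeff m (d⁄dX ℚ (psComp (PowerSeries.exp ℚ) T))
      = coeff m (d⁄dX ℚ (∑ n ∈ range (m+2), PowerSeries.C ((n.factorial : ℚ)⁻¹) * T ^ n)) := by
    rw [PowerSeries.coeff_derivative, PowerSeries.coeff_derivative,
      coeffE hT0 (m+1) (m+1) le_rfl]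
  have rhs1 : coeff m (d⁄dX ℚ T * psComp (PowerSeries.exp ℚ) T)
      = coeff m (d⁄dX ℚ T * (∑ n ∈ range (m+1), PowerSeries.C ((n.factorial : ℚ)⁻¹) * T ^ n)) := by
    rw [PowerSeries.coeff_mul, PowerSeries.coeff_mul]
    refine Finset.sum_congr rfl fun p hp => ?_
    have hpm : p.1 + p.2 = m := Finset.HasAntidiagonal.mem_antidiagonal.mp hp
    rw [coeffE hT0 p.2 m (by omega)]
  rw [lhs1, rhs1, hD]


/-- Lacasse's identity: with `U(x) = ∑_{n≥0} nⁿ xⁿ/n!` (and `0⁰ = 1`),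
`U³ − U² = ∑_{n≥0} n^{n+1} xⁿ/n!`, and both sides equal `T/(1−T)³` where `T` is the
tree function, the unique power series over `ℚ` with zero constant term satisfying
`T = x·exp(T)`. -/
theorem lacasse_identity (U T : PowerSeries ℚ)
    (hU : U = PowerSeries.mk fun n => (n : ℚ) ^ n / (n.factorial : ℚ))
    (hT0 : constantCoeff T = 0) (hT : T = X * psComp (PowerSeries.exp ℚ) T) :
    U ^ 3 - U ^ 2 = (PowerSeries.mk fun n => (n : ℚ) ^ (n + 1) / (n.factorial : ℚ)) ∧
      U ^ 3 - U ^ 2 = T * ((1 - T) ^ 3)⁻¹ := by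
  set E := psComp (PowerSeries.exp ℚ) T with hE
  -- derivative of T
  have hdT : d⁄dX ℚ T = E + T * d⁄dX ℚ T := by
    conv_lhs => rw [hT]
    rw [Derivation.leibniz, derivE hT0, smul_eq_mul, smul_eq_mul, PowerSeries.derivative_X,
      mul_one]
    conv_lhs => rw [show X * (d⁄dX ℚ T * E) = d⁄dX ℚ T * (X * E) by ring, ← hT]
    ring
  have hP : X * d⁄dX ℚ T = T + T * (X * d⁄dX ℚ T) := by
    conv_lhs => rw [hdT]
    rw [mul_add, ← hT]
    ring
  -- coefficient facts
  have ht0 : coeff 0 T = 0 := by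
    rwa [PowerSeries.coeff_zero_eq_constantCoeff]
  have hXdT : ∀ j : ℕ, coeff j (X * d⁄dX ℚ T) = (j : ℚ) * coeff j T := by
    intro j
    cases j with
    | zero => simp [PowerSeries.coeff_zero_X_mul]
    | succ j =>
        rw [PowerSeries.coeff_succ_X_mul, PowerSeries.coeff_derivative]
        push_cast
        ring
  have hrec : ∀ n : ℕ, (n : ℚ) * coeff n T
      = coeff n T + ∑ i ∈ range (n+1),
          coeff i T * (((n-i : ℕ)) : ℚ) * coeff (n-i) T := by
    intro n
    have := congrArg (coeff n) hP
    rw [hXdT, map_add, PowerSeries.coeff_mul,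
      Finset.Nat.sum_antidiagonal_eq_sum_range_succ_mk] at this
    rw [this]
    congr 1
    refine Finset.sum_congr rfl fun i _ => ?_
    rw [hXdT]
    ring
  have ht1 : coeff 1 T = 1 := by
    conv_lhs => rw [hT]
    rw [show (1 : ℕ) = 0 + 1 from rfl, PowerSeries.coeff_succ_X_mul, hE, coeff_psComp_exp]
    simp
  have cayley : ∀ n : ℕ, 1 ≤ n → coeff n T = (n : ℚ) ^ (n-1) / (n.factorial : ℚ) := by
    intro n
    induction n using Nat.strong_induction_on with
    | _ n ih =>
      intro hn
      rcases eq_or_lt_of_le hn with h1 | h2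
      · rw [← h1, ht1]
        norm_num
      · -- inductive step, n ≥ 2
        have hfn : (n.factorial : ℚ) ≠ 0 := Nat.cast_ne_zero.mpr n.factorial_ne_zero
        have hS : ∑ i ∈ range (n+1), coeff i T * (((n-i : ℕ)) : ℚ) * coeff (n-i) T
            = ((n : ℚ)^n - (n : ℚ)^(n-1)) / (n.factorial : ℚ) := by
          rw [Finset.sum_range_succ]
          have hlastz : coeff n T * (((n-n : ℕ)) : ℚ) * coeff (n-n) T = 0 := by
            simp
          rw [hlastz, add_zero]
          have e0 : ∑ i ∈ range n, coeff i T * (((n-i : ℕ)) : ℚ) * coeff (n-i) T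
              = ∑ i ∈ range ((n-1)+1), coeff i T * (((n-i : ℕ)) : ℚ) * coeff (n-i) T := by
            rw [show (n-1)+1 = n by omega]
          rw [e0, Finset.sum_range_succ'
            (fun i => coeff i T * (((n-i : ℕ)) : ℚ) * coeff (n-i) T) (n-1)]
          rw [ht0]
          simp only [zero_mul, mul_zero, add_zero]
          have hterm : ∀ j ∈ range (n-1),
              coeff (j+1) T * (((n-(j+1) : ℕ)) : ℚ) * coeff (n-(j+1)) T
              = (n.factorial : ℚ)⁻¹ * ((n.choose (j+1) : ℚ) * ((j+1 : ℕ) : ℚ) ^ j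
                  * (((n-1-j : ℕ)) : ℚ) ^ (n-1-j)) := by
            intro j hj
            have hjn : j < n - 1 := Finset.mem_range.mp hj
            have e1 : n - (j+1) = n - 1 - j := by omega
            rw [e1]
            have ha := ih (j+1) (by omega) (by omega)
            have hb := ih (n-1-j) (by omega) (by omega)
            rw [ha, hb]
            have hcc := Nat.cast_choose ℚ (show j+1 ≤ n by omega)
            rw [show n - (j+1) = n - 1 - j by omega] at hcc
            rw [hcc]
            have hfj : ((j+1).factorial : ℚ) ≠ 0 := Nat.cast_ne_zero.mpr (j+1).factorial_ne_zero
            have hfnj : ((n-1-j).factorial : ℚ) ≠ 0 :=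
              Nat.cast_ne_zero.mpr (n-1-j).factorial_ne_zero
            have hpows : (((n-1-j : ℕ)) : ℚ) ^ (n-1-j)
                = (((n-1-j : ℕ)) : ℚ) * (((n-1-j : ℕ)) : ℚ) ^ ((n-1-j)-1) := by
              conv_lhs => rw [show n-1-j = ((n-1-j)-1)+1 by omega]
              rw [pow_succ', show ((n-1-j)-1)+1 = n-1-j by omega]
            rw [hpows]
            rw [show (j+1) - 1 = j from rfl]
            field_simp
          rw [Finset.sum_congr rfl hterm, ← Finset.mul_sum, cayley_sum n (by omega)]
          field_simp
        have hpow : (n : ℚ)^n = (n : ℚ)^(n-1) * n := by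
          conv_lhs => rw [show n = (n-1)+1 by omega]
          rw [pow_succ, show (n-1)+1 = n by omega]
        have hmain : ((n : ℚ) - 1) * coeff n T
            = ((n : ℚ)^n - (n : ℚ)^(n-1)) / (n.factorial : ℚ) := by
          linear_combination hrec n + hS
        have hn1 : ((n : ℚ) - 1) ≠ 0 := by
          have : (2 : ℚ) ≤ (n : ℚ) := by exact_mod_cast h2
          linarith
        have hgoal : ((n : ℚ) - 1) * coeff n T
            = ((n : ℚ) - 1) * ((n : ℚ)^(n-1) / (n.factorial : ℚ)) := by
          rw [hmain, hpow]
          field_simp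
        exact mul_left_cancel₀ hn1 hgoal
  -- U coefficients
  have hu : ∀ n : ℕ, coeff n U = (n : ℚ) ^ n / (n.factorial : ℚ) := by
    intro n
    rw [hU, PowerSeries.coeff_mk]
  have hUV : U * (1 - T) = 1 := by
    ext n
    rw [PowerSeries.coeff_mul, Finset.Nat.sum_antidiagonal_eq_sum_range_succ_mk]
    cases n with
    | zero =>
        simp [hu 0, ht0, hT0, PowerSeries.coeff_one]
    | succ n =>
        rw [Finset.sum_range_succ]
        have hlast : coeff (n+1) U * coeff (n+1-(n+1)) (1 - T) = coeff (n+1) U := by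
          rw [Nat.sub_self, map_sub, PowerSeries.coeff_one, ht0]
          norm_num
        rw [hlast]
        have hterm : ∀ i ∈ range (n+1),
            coeff i U * coeff (n+1-i) (1 - T)
            = -(((n+1).factorial : ℚ)⁻¹ * (((n+1).choose i : ℚ) * ((i : ℕ) : ℚ) ^ i
                * ((((n+1)-i : ℕ)) : ℚ) ^ ((n+1)-i-1))) := by
          intro i hi
          have hin : i < n + 1 := Finset.mem_range.mp hi
          rw [map_sub, PowerSeries.coeff_one, if_neg (by omega), hu i,
            cayley (n+1-i) (by omega)]
          have hcc := Nat.cast_choose ℚ (show i ≤ n+1 by omega)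
          rw [hcc]
          have hfi : (i.factorial : ℚ) ≠ 0 := Nat.cast_ne_zero.mpr i.factorial_ne_zero
          have hfni : (((n+1)-i).factorial : ℚ) ≠ 0 :=
            Nat.cast_ne_zero.mpr ((n+1)-i).factorial_ne_zero
          have hfn1 : (((n+1)).factorial : ℚ) ≠ 0 :=
            Nat.cast_ne_zero.mpr (n+1).factorial_ne_zero
          field_simp
          ring
        rw [Finset.sum_congr rfl hterm, Finset.sum_neg_distrib, ← Finset.mul_sum,
          H0' (n+1) (by omega), hu (n+1), PowerSeries.coeff_one, if_neg (by omega)]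
        have hfn1 : (((n+1)).factorial : ℚ) ≠ 0 :=
          Nat.cast_ne_zero.mpr (n+1).factorial_ne_zero
        push_cast
        field_simp
        simp
  have hc3 : constantCoeff ((1 - T)^3) ≠ 0 := by
    rw [map_pow, map_sub, map_one, hT0]
    norm_num
  have hU3 : U ^ 3 = ((1 - T)^3)⁻¹ := by
    rw [PowerSeries.eq_inv_iff_mul_eq_one hc3, ← mul_pow, hUV, one_pow]
  have hTU : U - 1 = T * U := by linear_combination hUV
  have goal2 : U ^ 3 - U ^ 2 = T * ((1 - T)^3)⁻¹ := by
    rw [← hU3]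
    linear_combination (U^2) * hTU
  have hdUV : d⁄dX ℚ U * (1 - T) = U * d⁄dX ℚ T := by
    have h := congrArg (d⁄dX ℚ) hUV
    rw [Derivation.leibniz, smul_eq_mul, smul_eq_mul, map_sub, Derivation.map_one_eq_zero] at h
    linear_combination h
  have hmk : (PowerSeries.mk fun n => (n : ℚ) ^ (n + 1) / (n.factorial : ℚ))
      = X * d⁄dX ℚ U := by
    ext n
    cases n with
    | zero => simp
    | succ n =>
        rw [PowerSeries.coeff_mk, PowerSeries.coeff_succ_X_mul, PowerSeries.coeff_derivative,
          hu (n+1)]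
        have hfn1 : (((n+1)).factorial : ℚ) ≠ 0 :=
          Nat.cast_ne_zero.mpr (n+1).factorial_ne_zero
        push_cast
        rw [pow_succ]
        field_simp
  have hXdU : X * d⁄dX ℚ U = T * U ^ 3 := by
    linear_combination (U * X) * hdUV + (U^3) * hP
      - (X * d⁄dX ℚ U + (X * d⁄dX ℚ T) * U^2) * hUV
  have goal1 : U ^ 3 - U ^ 2
      = (PowerSeries.mk fun n => (n : ℚ) ^ (n + 1) / (n.factorial : ℚ)) := by
    rw [hmk, hXdU]
    linear_combination (U^2) * hTU
  exact ⟨goal1, goal2⟩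
end

section
/- (Rothe–Hagen identity.) For all positive integers k, l, every nonnegative integer p, and every integer n ≥ 0, Σ_{i+j=n, i,j≥0} (k/(pi+k))·C(pi+k, i) · (l/(pj+l))·C(pj+l, j) = ((k+l)/(pn+k+l)) · C(pn+k+l, n), as an identity of rational numbers, where C(a,b) is the ordinary binomial coefficient. -/
noncomputable def G (p k n : ℕ) : ℚ :=
  if k = 0 then (if n = 0 then 1 else 0)
  else (k : ℚ) / ((p * n + k : ℕ) : ℚ) * (((p * n + k).choose n : ℕ) : ℚ)

lemma G_zero_right (p k : ℕ) : G p k 0 = 1 := by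
  unfold G
  rcases Nat.eq_zero_or_pos k with h | h
  · simp [h]
  · have : k ≠ 0 := h.ne'
    simp [this]

lemma G_rec (p m t : ℕ) : G p (m+1) (t+1) = G p m (t+1) + G p (m+p) t := by
  rcases Nat.eq_zero_or_pos m with rfl | hm
  · rcases Nat.eq_zero_or_pos p with rfl | hp
    · unfold G
      rcases t with _ | t <;> simp [Nat.choose]
    · unfold G
      have hp' : p ≠ 0 := hp.ne'
      simp [hp']
      have h1 : ((p*t+p+1 : ℕ) : ℚ) * ((p*t+p).choose t : ℕ) =
          (((p*t+p+1).choose (t+1) : ℕ) : ℚ) * ((t+1 : ℕ) : ℚ) := by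
        exact_mod_cast congrArg (Nat.cast (R := ℚ)) (Nat.add_one_mul_choose_eq (p*t+p) t)
      have e1 : p * (t+1) + 1 = p*t+p+1 := by ring
      rw [e1] at *
      push_cast at h1 ⊢
      have d1 : ((p:ℚ)*t+p+1) ≠ 0 := by positivity
      have d2 : ((p:ℚ)*t+p) ≠ 0 := by positivity
      field_simp
      linear_combination (-1:ℚ) * h1
  · unfold G
    have hm' : m ≠ 0 := hm.ne'
    have hmp : m + p ≠ 0 := by omega
    simp [hm', hmp]
    obtain ⟨D, hD⟩ : ∃ D, D = p * t + p + m := ⟨_, rfl⟩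
    have e1 : p * (t+1) + (m+1) = D + 1 := by rw [hD]; ring
    have e2 : p * (t+1) + m = D := by rw [hD]; ring
    have e3 : p * t + (m + p) = D := by rw [hD]; ring
    rw [e1, e2, e3]
    rcases Nat.eq_zero_or_pos (D.choose t) with hc | hc
    · have hDt : D < t := by
        by_contra h
        push_neg at h
        exact (Nat.choose_pos h).ne' hc
      have hY : D.choose (t+1) = 0 := Nat.choose_eq_zero_of_lt (by omega)
      have hX : (D+1).choose (t+1) = 0 := Nat.choose_eq_zero_of_lt (by omega)
      simp [hc, hY, hX]
    · have hDt : t ≤ D := by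
        by_contra h
        exact hc.ne' (Nat.choose_eq_zero_of_lt (by omega))
      have h1 : ((D+1 : ℕ) : ℚ) * (D.choose t : ℕ) = (((D+1).choose (t+1) : ℕ) : ℚ) * ((t+1 : ℕ) : ℚ) := by
        exact_mod_cast congrArg (Nat.cast (R := ℚ)) (Nat.add_one_mul_choose_eq D t)
      have h2 : ((D.choose (t+1) : ℕ) : ℚ) * ((t+1 : ℕ) : ℚ) = (D.choose t : ℕ) * ((D:ℚ) - t) := by
        have := congrArg (Nat.cast (R := ℚ)) (Nat.choose_succ_right_eq D t)
        push_cast [Nat.cast_sub hDt] at this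
        push_cast
        linarith [this]
      have ht1 : ((t:ℚ)+1) ≠ 0 := by positivity
      have hX : (((D+1).choose (t+1) : ℕ) : ℚ) = ((D:ℚ)+1) * (D.choose t : ℕ) / ((t:ℚ)+1) := by
        push_cast at h1 ⊢
        field_simp
        linarith [h1]
      have hY : ((D.choose (t+1) : ℕ) : ℚ) = (D.choose t : ℕ) * ((D:ℚ) - t) / ((t:ℚ)+1) := by
        push_cast at h2 ⊢
        field_simp
        linarith [h2]
      rw [hX, hY]
      have hD0 : ((D:ℚ)) ≠ 0 := by
        have : 0 < D := by omega
        exact_mod_cast this.ne'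
      have hD1 : ((D:ℚ)+1) ≠ 0 := by positivity
      subst hD
      push_cast
      field_simp
      ring

lemma G_conv (p : ℕ) : ∀ n k l, (∑ i ∈ Finset.range (n+1), G p k i * G p l (n - i)) = G p (k+l) n := by
  intro n
  induction n with
  | zero =>
    intro k l
    simp [G_zero_right]
  | succ t ih =>
    intro k l
    induction k with
    | zero =>
      rw [Finset.sum_eq_single 0]
      · simp [G_zero_right, G]
      · intro i _ hi
        have : G p 0 i = 0 := by simp [G, hi]
        rw [this, zero_mul]
      · intro h
        exact absurd (Finset.mem_range.mpr (by omega)) h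
    | succ m ihk =>
      have expand : ∀ j, G p (m+1) (j+1) * G p l (t + 1 - (j+1))
          = G p m (j+1) * G p l (t + 1 - (j+1)) + G p (m+p) j * G p l (t - j) := by
        intro j
        rw [G_rec, add_mul, Nat.succ_sub_succ]
      rw [Finset.sum_range_succ']
      simp only [expand]
      rw [Finset.sum_add_distrib]
      have hf0 : G p (m+1) 0 = G p m 0 := by rw [G_zero_right, G_zero_right]
      rw [hf0, add_right_comm,
        ← Finset.sum_range_succ' (fun i => G p m i * G p l (t + 1 - i)) (t+1),
        ihk, ih (m+p) l,
        show m+1+l = m+l+1 from by ring, show m+p+l = m+l+p from by ring, G_rec]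


/-- The Rothe–Hagen identity: for positive integers `k`, `l`, nonnegative integer `p`
and `n ≥ 0`,
`∑_{i+j=n} (k/(pi+k))·C(pi+k,i)·(l/(pj+l))·C(pj+l,j) = ((k+l)/(pn+k+l))·C(pn+k+l,n)`
as rational numbers. -/
theorem rothe_hagen (k l : ℕ) (hk : 1 ≤ k) (hl : 1 ≤ l) (p n : ℕ) :
    ∑ i ∈ Finset.range (n + 1),
        ((k : ℚ) / ((p * i + k : ℕ) : ℚ)) * (((p * i + k).choose i : ℕ) : ℚ) *
          (((l : ℚ) / ((p * (n - i) + l : ℕ) : ℚ)) *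
            (((p * (n - i) + l).choose (n - i) : ℕ) : ℚ)) =
      (((k + l : ℕ) : ℚ) / ((p * n + k + l : ℕ) : ℚ)) *
        (((p * n + k + l).choose n : ℕ) : ℚ) := by
  have h := G_conv p n k l
  have hk0 : k ≠ 0 := by omega
  have hl0 : l ≠ 0 := by omega
  have hkl : k + l ≠ 0 := by omega
  simp only [G, if_neg hk0, if_neg hl0, if_neg hkl] at h
  rw [show p * n + k + l = p * n + (k + l) from by ring]
  rw [← h]
end
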